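/- For every Set-based tripos P there exists an implicative algebra (A, ≼, →, S) such that P is isomorphic to the implicative tripos induced by (A, ≼, →, S); that is, there is a family of Heyting algebra isomorphisms φ_X : A^X/S[X] → P X, indexed by sets X, which is natural: for every function f : X → Y, P f ∘ φ_Y equals φ_X composed with the substitution map of the implicative tripos induced by precomposition with f. -/

import Mathlib

universe u v

/-- An implicative algebra: a complete lattice equipped with an implication
satisfying the variance and distributivity laws, together with a separator. -/
structure ImpAlg : Type (u + 1) where
  carrier : Type u
  [lat : CompleteLattice carrier]
  imp : carrier → carrier → carrier
  imp_mono : ∀ {a a' b b' : carrier}, a' ≤ a → b ≤ b' → imp a b ≤ imp a' b'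
  imp_sInf : ∀ (a : carrier) (B : Set carrier), imp a (sInf B) = ⨅ b ∈ B, imp a b
  S : Set carrier
  S_up : ∀ {a a' : carrier}, a ∈ S → a ≤ a' → a' ∈ S
  S_K : (⨅ a : carrier, ⨅ b : carrier, imp a (imp b a)) ∈ S
  S_S : (⨅ a : carrier, ⨅ b : carrier, ⨅ c : carrier,
          imp (imp a (imp b c)) (imp (imp a b) (imp a c))) ∈ S
  S_mp : ∀ {a b : carrier}, imp a b ∈ S → a ∈ S → b ∈ S

attribute [instance] ImpAlg.lat

section TriposAux

variable {P : Type u → Type v} [∀ X, HeytingAlgebra (P X)]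
variable (map : ∀ {X Y : Type u}, (X → Y) → P Y → P X)
variable (fA : ∀ {X Y : Type u}, (X → Y) → P X → P Y)

theorem tri_map_mono
    (map_inf : ∀ {X Y : Type u} (f : X → Y) (p q : P Y), map f (p ⊓ q) = map f p ⊓ map f q)
    {X Y : Type u} (f : X → Y) {p q : P Y} (h : p ≤ q) : map f p ≤ map f q := by
  have h1 : map f (p ⊓ q) = map f p ⊓ map f q := map_inf f p q
  rw [inf_eq_left.mpr h] at h1
  calc map f p = map f p ⊓ map f q := h1
    _ ≤ map f q := inf_le_right

theorem tri_counit
    (adjA : ∀ {X Y : Type u} (f : X → Y) (p : P X) (q : P Y), q ≤ fA f p ↔ map f q ≤ p)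
    {X Y : Type u} (f : X → Y) (r : P X) : map f (fA f r) ≤ r :=
  (adjA f r (fA f r)).1 le_rfl

theorem tri_unit
    (adjA : ∀ {X Y : Type u} (f : X → Y) (p : P X) (q : P Y), q ≤ fA f p ↔ map f q ≤ p)
    {X Y : Type u} (f : X → Y) (q : P Y) : q ≤ fA f (map f q) :=
  (adjA f (map f q) q).2 le_rfl

theorem tri_fA_comp
    (map_comp : ∀ {X Y Z : Type u} (f : X → Y) (g : Y → Z), map (g ∘ f) = map f ∘ map g)
    (adjA : ∀ {X Y : Type u} (f : X → Y) (p : P X) (q : P Y), q ≤ fA f p ↔ map f q ≤ p)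
    {X Y Z : Type u} (g : X → Y) (f : Y → Z) (r : P X) :
    fA f (fA g r) = fA (f ∘ g) r := by
  have key : ∀ q : P Z, q ≤ fA f (fA g r) ↔ q ≤ fA (f ∘ g) r := by
    intro q
    rw [adjA, adjA, adjA, map_comp g f]
    rfl
  exact le_antisymm ((key _).1 le_rfl) ((key _).2 le_rfl)

theorem tri_fA_bij
    (map_id : ∀ (X : Type u), map (id : X → X) = id)
    (map_comp : ∀ {X Y Z : Type u} (f : X → Y) (g : Y → Z), map (g ∘ f) = map f ∘ map g)
    (map_inf : ∀ {X Y : Type u} (f : X → Y) (p q : P Y), map f (p ⊓ q) = map f p ⊓ map f q)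
    (adjA : ∀ {X Y : Type u} (f : X → Y) (p : P X) (q : P Y), q ≤ fA f p ↔ map f q ≤ p)
    {X Y : Type u} (f : X → Y) (g : Y → X) (hgf : g ∘ f = id) (hfg : f ∘ g = id)
    (r : P X) : fA f r = map g r := by
  have e1 : ∀ s : P X, map f (map g s) = s := by
    intro s
    calc map f (map g s) = map (g ∘ f) s := (congrFun (map_comp f g) s).symm
      _ = s := by rw [hgf, map_id]; rfl
  have e2 : ∀ s : P Y, map g (map f s) = s := by
    intro s
    calc map g (map f s) = map (f ∘ g) s := (congrFun (map_comp g f) s).symm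
      _ = s := by rw [hfg, map_id]; rfl
  refine le_antisymm ?_ ((adjA f r (map g r)).2 (le_of_eq (e1 r)))
  have h1 : map f (fA f r) ≤ r := tri_counit @map @fA @adjA f r
  have h2 : map g (map f (fA f r)) ≤ map g r := tri_map_mono @map @map_inf g h1
  rwa [e2] at h2

theorem tri_fA_surj
    (map_id : ∀ (X : Type u), map (id : X → X) = id)
    (map_comp : ∀ {X Y Z : Type u} (f : X → Y) (g : Y → Z), map (g ∘ f) = map f ∘ map g)
    (map_inf : ∀ {X Y : Type u} (f : X → Y) (p q : P Y), map f (p ⊓ q) = map f p ⊓ map f q)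
    (adjA : ∀ {X Y : Type u} (f : X → Y) (p : P X) (q : P Y), q ≤ fA f p ↔ map f q ≤ p)
    {X Y : Type u} (s : X → Y) (hs : Function.Surjective s)
    (r : P Y) : fA s (map s r) = r := by
  set j : Y → X := Function.surjInv hs with hj
  have hsj : s ∘ j = id := funext fun y => Function.surjInv_eq hs y
  have e : ∀ z : P Y, map j (map s z) = z := by
    intro z
    calc map j (map s z) = map (s ∘ j) z := (congrFun (map_comp j s) z).symm
      _ = z := by rw [hsj, map_id]; rfl
  refine le_antisymm ?_ (tri_unit @map @fA @adjA s r)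
  have h1 : map s (fA s (map s r)) ≤ map s r := tri_counit @map @fA @adjA s (map s r)
  have h2 : map j (map s (fA s (map s r))) ≤ map j (map s r) := tri_map_mono @map @map_inf j h1
  rwa [e, e] at h2

theorem tri_himp_frob
    (map_inf : ∀ {X Y : Type u} (f : X → Y) (p q : P Y), map f (p ⊓ q) = map f p ⊓ map f q)
    (adjA : ∀ {X Y : Type u} (f : X → Y) (p : P X) (q : P Y), q ≤ fA f p ↔ map f q ≤ p)
    {X Y : Type u} (f : X → Y) (A : P Y) (B : P X) :
    fA f (map f A ⇨ B) = A ⇨ fA f B := by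
  have key : ∀ q : P Y, q ≤ fA f (map f A ⇨ B) ↔ q ≤ A ⇨ fA f B := by
    intro q
    rw [adjA, le_himp_iff, ← map_inf, ← adjA, ← le_himp_iff]
  exact le_antisymm ((key _).1 le_rfl) ((key _).2 le_rfl)

theorem tri_top_le_fA
    (map_top : ∀ {X Y : Type u} (f : X → Y), map f (⊤ : P Y) = ⊤)
    (adjA : ∀ {X Y : Type u} (f : X → Y) (p : P X) (q : P Y), q ≤ fA f p ↔ map f q ≤ p)
    {X Y : Type u} (f : X → Y) (r : P X) : ⊤ ≤ fA f r ↔ ⊤ ≤ r := by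
  rw [adjA, map_top]

end TriposAux

/-- The total space of a family of subsets of `Sg`. -/
def Tot {Sg : Type u} {X : Type u} (c : X → Set Sg) : Type u := {z : X × Sg // z.2 ∈ c z.1}

def Tot.p {Sg : Type u} {X : Type u} {c : X → Set Sg} : Tot c → X := fun z => z.1.1
def Tot.q {Sg : Type u} {X : Type u} {c : X → Set Sg} : Tot c → Sg := fun z => z.1.2

/-- Codes for an implication whose antecedent is saturated over supersets. -/
def JSet {Sg : Type u} (j0 : Set Sg × Sg → Sg) : Set Sg × Sg → Set Sg :=
  fun w => {σ | ∃ c', w.1 ⊆ c' ∧ σ = j0 (c', w.2)}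

/-- The implication of the implicative structure built from a tripos. -/
def ImpSet {Sg : Type u} (j0 : Set Sg × Sg → Sg) : Set Sg × Set Sg → Set Sg :=
  fun w => {σ | ∃ τ ∈ w.2, σ ∈ JSet j0 (w.1, τ)}

/-- Every `Set`-based tripos is (isomorphic to) an implicative tripos: there is an
implicative algebra `M` and a natural family of surjections
`ρ X : M.carrier ^ X → P X` that both preserve and reflect the entailment preorder
`a ⊢_{S[X]} b ⟺ ⨅_{x ∈ X} (a x → b x) ∈ S` of the implicative tripos; such a family
induces, through the poset reflections `M^X/S[X]`, a natural family of Heyting algebra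
isomorphisms `M^X/S[X] ≅ P X`. -/
theorem setBased_tripos_is_implicative
    (P : Type u → Type v) [∀ X, HeytingAlgebra (P X)]
    (map : ∀ {X Y : Type u}, (X → Y) → P Y → P X)
    (map_id : ∀ (X : Type u), map (id : X → X) = id)
    (map_comp : ∀ {X Y Z : Type u} (f : X → Y) (g : Y → Z), map (g ∘ f) = map f ∘ map g)
    (map_inf : ∀ {X Y : Type u} (f : X → Y) (p q : P Y), map f (p ⊓ q) = map f p ⊓ map f q)
    (map_sup : ∀ {X Y : Type u} (f : X → Y) (p q : P Y), map f (p ⊔ q) = map f p ⊔ map f q)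
    (map_himp : ∀ {X Y : Type u} (f : X → Y) (p q : P Y), map f (p ⇨ q) = map f p ⇨ map f q)
    (map_top : ∀ {X Y : Type u} (f : X → Y), map f (⊤ : P Y) = ⊤)
    (map_bot : ∀ {X Y : Type u} (f : X → Y), map f (⊥ : P Y) = ⊥)
    (fE fA : ∀ {X Y : Type u}, (X → Y) → P X → P Y)
    (fE_mono : ∀ {X Y : Type u} (f : X → Y), Monotone (fE f))
    (fA_mono : ∀ {X Y : Type u} (f : X → Y), Monotone (fA f))
    (adjE : ∀ {X Y : Type u} (f : X → Y) (p : P X) (q : P Y), fE f p ≤ q ↔ p ≤ map f q)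
    (adjA : ∀ {X Y : Type u} (f : X → Y) (p : P X) (q : P Y), q ≤ fA f p ↔ map f q ≤ p)
    (BC : ∀ {X X₁ X₂ Y : Type u} (f₁ : X → X₁) (f₂ : X → X₂) (g₁ : X₁ → Y) (g₂ : X₂ → Y),
      g₁ ∘ f₁ = g₂ ∘ f₂ →
      (∀ (x₁ : X₁) (x₂ : X₂), g₁ x₁ = g₂ x₂ → ∃! x : X, f₁ x = x₁ ∧ f₂ x = x₂) →
      fE f₁ ∘ map f₂ = map g₁ ∘ fE g₂ ∧ fA f₁ ∘ map f₂ = map g₁ ∘ fA g₂)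
    (hgen : ∃ (Sig : Type u) (tr : P Sig),
      ∀ X : Type u, Function.Surjective (fun σ : X → Sig => map σ tr)) :
    ∃ (M : ImpAlg.{u}) (ρ : ∀ X : Type u, (X → M.carrier) → P X),
      (∀ X : Type u, Function.Surjective (ρ X)) ∧
      (∀ (X : Type u) (a b : X → M.carrier),
        ρ X a ≤ ρ X b ↔ (⨅ x : X, M.imp (a x) (b x)) ∈ M.S) ∧
      (∀ (X Y : Type u) (f : X → Y) (b : Y → M.carrier),
        ρ X (b ∘ f) = map f (ρ Y b)) := by
  obtain ⟨Sig, tr, hg⟩ := hgen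
  have mapc : ∀ {X Y Z : Type u} (f : X → Y) (g : Y → Z) (r : P Z),
      map f (map g r) = map (g ∘ f) r := fun f g r => (congrFun (map_comp f g) r).symm
  obtain ⟨Φ, hΦ⟩ : ∃ q : P (Set Sig), q = fA (Tot.p (c := fun s : Set Sig => s))
      (map (Tot.q (c := fun s : Set Sig => s)) tr) := ⟨_, rfl⟩
  have Rep : ∀ (X : Type u) (c : X → Set Sig),
      map c Φ = fA (Tot.p (c := c)) (map (Tot.q (c := c)) tr) := by
    intro X c
    have h := (BC (Tot.p (c := c))
        (fun z => (⟨(c z.1.1, z.1.2), z.2⟩ : Tot (fun s : Set Sig => s)))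
        c (Tot.p (c := fun s : Set Sig => s))
        rfl
        (by
          rintro x ⟨⟨s, σ⟩, hm⟩ he
          -- he : c x = s
          refine ⟨⟨(x, σ), ?_⟩, ⟨rfl, ?_⟩, ?_⟩
          · exact he ▸ hm
          · exact Subtype.ext (by simp only []; exact congrArg (fun t => (t, σ)) he)
          · rintro ⟨⟨x', σ'⟩, hm'⟩ ⟨h1, h2⟩
            apply Subtype.ext
            have h3 : σ' = σ := congrArg (fun t => t.val.2) h2
            simp only [Tot.p] at h1
            exact Prod.ext h1 h3)).2
    have h2 := congrFun h (map (Tot.q (c := fun s : Set Sig => s)) tr)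
    simp only [Function.comp_apply] at h2
    rw [hΦ]
    refine h2.symm.trans ?_
    congr 1
    calc map (fun z : Tot c => (⟨(c z.1.1, z.1.2), z.2⟩ : Tot (fun s : Set Sig => s)))
          (map (Tot.q (c := fun s : Set Sig => s)) tr)
        = map ((Tot.q (c := fun s : Set Sig => s)) ∘
            (fun z : Tot c => (⟨(c z.1.1, z.1.2), z.2⟩ : Tot (fun s : Set Sig => s)))) tr := by
          exact mapc _ _ _
      _ = map (Tot.q (c := c)) tr := rfl
  -- Collapse: universal quantification to a point computes the union
  have Collapse : ∀ (X : Type u) (c : X → Set Sig),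
      map (fun _ : PUnit.{u+1} => ⋃ x, c x) Φ
        = fA (fun _ : X => PUnit.unit.{u+1}) (map c Φ) := by
    intro X c
    have hsurj : Function.Surjective
        (fun z : Tot c => (⟨(PUnit.unit.{u+1}, z.1.2),
          Set.mem_iUnion.2 ⟨z.1.1, z.2⟩⟩ : Tot (fun _ : PUnit.{u+1} => ⋃ x, c x))) := by
      rintro ⟨⟨u, σ⟩, hm⟩
      obtain ⟨x, hx⟩ := Set.mem_iUnion.1 hm
      exact ⟨⟨(x, σ), hx⟩, Subtype.ext (by cases u; rfl)⟩
    set s : Tot c → Tot (fun _ : PUnit.{u+1} => ⋃ x, c x) :=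
      fun z => ⟨(PUnit.unit.{u+1}, z.1.2), Set.mem_iUnion.2 ⟨z.1.1, z.2⟩⟩ with hs
    calc map (fun _ : PUnit.{u+1} => ⋃ x, c x) Φ
        = fA Tot.p (map (Tot.q (c := fun _ : PUnit.{u+1} => ⋃ x, c x)) tr) := Rep _ _
      _ = fA Tot.p (fA s (map s (map (Tot.q (c := fun _ : PUnit.{u+1} => ⋃ x, c x)) tr))) := by
          rw [tri_fA_surj @map @fA @map_id @map_comp @map_inf @adjA s hsurj]
      _ = fA ((Tot.p (c := fun _ : PUnit.{u+1} => ⋃ x, c x)) ∘ s)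
            (map ((Tot.q (c := fun _ : PUnit.{u+1} => ⋃ x, c x)) ∘ s) tr) := by
          rw [tri_fA_comp @map @fA @map_comp @adjA, map_comp]; rfl
      _ = fA ((fun _ : X => PUnit.unit.{u+1}) ∘ Tot.p (c := c)) (map (Tot.q (c := c)) tr) := rfl
      _ = fA (fun _ : X => PUnit.unit.{u+1}) (fA (Tot.p (c := c)) (map (Tot.q (c := c)) tr)) :=
          (tri_fA_comp @map @fA @map_comp @adjA _ _ _).symm
      _ = fA (fun _ : X => PUnit.unit.{u+1}) (map c Φ) := by rw [Rep]
  -- Monotonicity of Φ along pointwise inclusion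
  have MonoPhi : ∀ (X : Type u) (c d : X → Set Sig), (∀ x, c x ⊆ d x) →
      map d Φ ≤ map c Φ := by
    intro X c d hcd
    rw [Rep X c, Rep X d, adjA]
    set ι : Tot c → Tot d := fun z => ⟨z.1, hcd z.1.1 z.2⟩ with hι
    have h2 := tri_map_mono @map @map_inf ι
      (tri_counit @map @fA @adjA (Tot.p (c := d)) (map (Tot.q (c := d)) tr))
    calc map (Tot.p (c := c)) (fA (Tot.p (c := d)) (map (Tot.q (c := d)) tr))
        = map ι (map (Tot.p (c := d)) (fA (Tot.p (c := d)) (map (Tot.q (c := d)) tr))) :=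
          congrFun (map_comp ι (Tot.p (c := d))) _
      _ ≤ map ι (map (Tot.q (c := d)) tr) := h2
      _ = map (Tot.q (c := c)) tr := (congrFun (map_comp ι (Tot.q (c := d))) tr).symm
  -- Φ on singletons gives back the generic predicate
  have singPhi : map (fun σ : Sig => ({σ} : Set Sig)) Φ = tr := by
    rw [Rep]
    have hbij := tri_fA_bij @map @fA @map_id @map_comp @map_inf @adjA
      (Tot.p (c := fun σ : Sig => ({σ} : Set Sig)))
      (fun σ => (⟨(σ, σ), rfl⟩ : Tot (fun σ : Sig => ({σ} : Set Sig))))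
      (funext fun z => Subtype.ext (Prod.ext rfl z.2.symm))
      rfl (map (Tot.q (c := fun σ : Sig => ({σ} : Set Sig))) tr)
    rw [hbij]
    calc map (fun σ : Sig => (⟨(σ, σ), rfl⟩ : Tot (fun σ : Sig => ({σ} : Set Sig))))
          (map (Tot.q (c := fun σ : Sig => ({σ} : Set Sig))) tr)
        = map ((Tot.q (c := fun σ : Sig => ({σ} : Set Sig))) ∘
            (fun σ : Sig => (⟨(σ, σ), rfl⟩ : Tot (fun σ : Sig => ({σ} : Set Sig))))) tr :=
          (congrFun (map_comp _ (Tot.q (c := fun σ : Sig => ({σ} : Set Sig)))) tr).symm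
      _ = map (id : Sig → Sig) tr := rfl
      _ = tr := congrFun (map_id Sig) tr
  -- a code for implication with generic consequent
  obtain ⟨j₀, hj₀⟩ := hg (Set Sig × Sig) (map Prod.fst Φ ⇨ map Prod.snd tr)
  simp only [] at hj₀
  -- semantics of JSet
  have JPhi : map (JSet j₀) Φ = map Prod.fst Φ ⇨ map Prod.snd tr := by
    have hsurj : Function.Surjective
        (fun y : {y : (Set Sig × Sig) × Set Sig // y.1.1 ⊆ y.2} =>
          (⟨(y.1.1, j₀ (y.1.2, y.1.1.2)), ⟨y.1.2, y.2, rfl⟩⟩ : Tot (JSet j₀))) := by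
      rintro ⟨⟨w, σ⟩, hc⟩
      obtain ⟨c', h1, h2⟩ := hc
      exact ⟨⟨(w, c'), h1⟩, Subtype.ext (by simp only []; rw [← h2])⟩
    set F := {y : (Set Sig × Sig) × Set Sig // y.1.1 ⊆ y.2} with hF
    set t : F → Tot (JSet j₀) :=
      fun y => ⟨(y.1.1, j₀ (y.1.2, y.1.1.2)), ⟨y.1.2, y.2, rfl⟩⟩ with ht
    set πF : F → Set Sig × Sig := fun y => y.1.1 with hπF
    have step1 : map (JSet j₀) Φ
        = fA πF (map (fun y : F => y.1.2) Φ ⇨ map (fun y : F => y.1.1.2) tr) := by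
      calc map (JSet j₀) Φ
          = fA Tot.p (map (Tot.q (c := JSet j₀)) tr) := Rep _ _
        _ = fA Tot.p (fA t (map t (map (Tot.q (c := JSet j₀)) tr))) := by
            rw [tri_fA_surj @map @fA @map_id @map_comp @map_inf @adjA t hsurj]
        _ = fA ((Tot.p (c := JSet j₀)) ∘ t) (map ((Tot.q (c := JSet j₀)) ∘ t) tr) := by
            rw [tri_fA_comp @map @fA @map_comp @adjA, map_comp]; rfl
        _ = fA πF (map ((fun w : Set Sig × Sig => j₀ w) ∘ (fun y : F => (y.1.2, y.1.1.2))) tr) := rfl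
        _ = fA πF (map (fun y : F => (y.1.2, y.1.1.2)) (map j₀ tr)) := by
            rw [map_comp]; rfl
        _ = fA πF (map (fun y : F => y.1.2) Φ ⇨ map (fun y : F => y.1.1.2) tr) := by
            rw [hj₀, map_himp, mapc, mapc]; rfl
    rw [step1]
    refine le_antisymm ?_ ?_
    · set s' : Set Sig × Sig → F := fun w => ⟨(w, w.1), subset_rfl⟩ with hs'
      have e1 : ∀ Z : P (Set Sig × Sig), map s' (map πF Z) = Z := by
        intro Z
        calc map s' (map πF Z) = map (πF ∘ s') Z := (congrFun (map_comp s' πF) Z).symm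
          _ = Z := by rw [show πF ∘ s' = id from rfl, map_id]; rfl
      calc fA πF (map (fun y : F => y.1.2) Φ ⇨ map (fun y : F => y.1.1.2) tr)
          = map s' (map πF (fA πF (map (fun y : F => y.1.2) Φ ⇨ map (fun y : F => y.1.1.2) tr))) :=
            (e1 _).symm
        _ ≤ map s' (map (fun y : F => y.1.2) Φ ⇨ map (fun y : F => y.1.1.2) tr) :=
            tri_map_mono @map @map_inf s' (tri_counit @map @fA @adjA πF _)
        _ = map ((fun y : F => y.1.2) ∘ s') Φ ⇨ map ((fun y : F => y.1.1.2) ∘ s') tr := by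
            rw [map_himp, mapc, mapc]
        _ = map Prod.fst Φ ⇨ map Prod.snd tr := rfl
    · rw [adjA]
      have hmono : map (fun y : F => y.1.2) Φ ≤ map (fun y : F => y.1.1.1) Φ :=
        MonoPhi F (fun y : F => y.1.1.1) (fun y : F => y.1.2) (fun y => y.2)
      calc map πF (map Prod.fst Φ ⇨ map Prod.snd tr)
          = map (Prod.fst ∘ πF) Φ ⇨ map (Prod.snd ∘ πF) tr := by
            rw [map_himp, mapc, mapc]
        _ = map (fun y : F => y.1.1.1) Φ ⇨ map (fun y : F => y.1.1.2) tr := rfl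
        _ ≤ map (fun y : F => y.1.2) Φ ⇨ map (fun y : F => y.1.1.2) tr :=
            himp_le_himp hmono le_rfl
  -- semantics of ImpSet
  have ImpPhi : map (ImpSet j₀) Φ = map Prod.fst Φ ⇨ map Prod.snd Φ := by
    set H := Tot (Prod.snd : Set Sig × Set Sig → Set Sig) with hH
    set cH : H → Set Sig := fun y => JSet j₀ (y.1.1.1, y.1.2) with hcH
    set uu : Tot cH → Tot (ImpSet j₀) :=
      fun z => ⟨(z.1.1.1.1, z.1.2), ⟨z.1.1.1.2, z.1.1.2, z.2⟩⟩ with huu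
    have hsurj : Function.Surjective uu := by
      rintro ⟨⟨w, σ⟩, hm⟩
      obtain ⟨τ, h1, h2⟩ := hm
      exact ⟨⟨(⟨(w, τ), h1⟩, σ), h2⟩, rfl⟩
    have e2 : map cH Φ
        = map (Tot.p (c := (Prod.snd : Set Sig × Set Sig → Set Sig))) (map Prod.fst Φ)
          ⇨ map (Tot.q (c := (Prod.snd : Set Sig × Set Sig → Set Sig))) tr := by
      calc map cH Φ
          = map (fun y : H => (y.1.1.1, y.1.2)) (map (JSet j₀) Φ) :=
            (mapc (fun y : H => (y.1.1.1, y.1.2)) (JSet j₀) Φ).symm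
        _ = map (fun y : H => (y.1.1.1, y.1.2)) (map Prod.fst Φ ⇨ map Prod.snd tr) := by
            rw [JPhi]
        _ = map (Prod.fst ∘ (fun y : H => (y.1.1.1, y.1.2))) Φ
              ⇨ map (Prod.snd ∘ (fun y : H => (y.1.1.1, y.1.2))) tr := by
            rw [map_himp, mapc, mapc]
        _ = map (Tot.p (c := (Prod.snd : Set Sig × Set Sig → Set Sig))) (map Prod.fst Φ)
              ⇨ map (Tot.q (c := (Prod.snd : Set Sig × Set Sig → Set Sig))) tr := by
            rw [mapc]; rfl
    calc map (ImpSet j₀) Φ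
        = fA Tot.p (map (Tot.q (c := ImpSet j₀)) tr) := Rep _ _
      _ = fA Tot.p (fA uu (map uu (map (Tot.q (c := ImpSet j₀)) tr))) := by
          rw [tri_fA_surj @map @fA @map_id @map_comp @map_inf @adjA uu hsurj]
      _ = fA ((Tot.p (c := ImpSet j₀)) ∘ uu) (map ((Tot.q (c := ImpSet j₀)) ∘ uu) tr) := by
          rw [tri_fA_comp @map @fA @map_comp @adjA, mapc]
      _ = fA (Tot.p (c := (Prod.snd : Set Sig × Set Sig → Set Sig)) ∘ (Tot.p (c := cH)))
            (map (Tot.q (c := cH)) tr) := rfl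
      _ = fA (Tot.p (c := (Prod.snd : Set Sig × Set Sig → Set Sig)))
            (fA (Tot.p (c := cH)) (map (Tot.q (c := cH)) tr)) :=
          (tri_fA_comp @map @fA @map_comp @adjA _ _ _).symm
      _ = fA (Tot.p (c := (Prod.snd : Set Sig × Set Sig → Set Sig))) (map cH Φ) := by
          rw [Rep]
      _ = fA (Tot.p (c := (Prod.snd : Set Sig × Set Sig → Set Sig)))
            (map (Tot.p (c := (Prod.snd : Set Sig × Set Sig → Set Sig))) (map Prod.fst Φ)
              ⇨ map (Tot.q (c := (Prod.snd : Set Sig × Set Sig → Set Sig))) tr) := by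
          rw [e2]
      _ = map Prod.fst Φ ⇨ fA (Tot.p (c := (Prod.snd : Set Sig × Set Sig → Set Sig)))
            (map (Tot.q (c := (Prod.snd : Set Sig × Set Sig → Set Sig))) tr) :=
          tri_himp_frob @map @fA @map_inf @adjA _ _ _
      _ = map Prod.fst Φ ⇨ map Prod.snd Φ := by rw [← Rep]
  -- pointwise implication computes heyting implication
  have mapImp : ∀ (X : Type u) (f g : X → Set Sig),
      map (fun x => ImpSet j₀ (f x, g x)) Φ = map f Φ ⇨ map g Φ := by
    intro X f g
    calc map (fun x => ImpSet j₀ (f x, g x)) Φ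
        = map (fun x => (f x, g x)) (map (ImpSet j₀) Φ) :=
          (mapc (fun x => (f x, g x)) (ImpSet j₀) Φ).symm
      _ = map (fun x => (f x, g x)) (map Prod.fst Φ ⇨ map Prod.snd Φ) := by rw [ImpPhi]
      _ = map f Φ ⇨ map g Φ := by rw [map_himp, mapc, mapc]; rfl
  -- top-entailment reduces along the union collapse
  have keyTop : ∀ (X : Type u) (c : X → Set Sig),
      (⊤ ≤ map (fun _ : PUnit.{u+1} => ⋃ x, c x) Φ) ↔ (⊤ ≤ map c Φ) := by
    intro X c
    rw [Collapse X c, tri_top_le_fA @map @fA @map_top @adjA]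
  classical
  refine ⟨{ carrier := (Set Sig)ᵒᵈ,
            lat := inferInstance,
            imp := fun a b => OrderDual.toDual
              (ImpSet j₀ (OrderDual.ofDual a, OrderDual.ofDual b)),
            imp_mono := ?_, imp_sInf := ?_,
            S := {d : (Set Sig)ᵒᵈ |
              ⊤ ≤ map (fun _ : PUnit.{u+1} => OrderDual.ofDual d) Φ},
            S_up := ?_, S_K := ?_, S_S := ?_, S_mp := ?_ },
          fun X a => map (fun x => OrderDual.ofDual (a x)) Φ, ?_, ?_, ?_⟩
  · -- imp_mono
    intro a a' b b' ha hb
    rw [OrderDual.toDual_le_toDual]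
    rintro σ ⟨τ, hτ, c', hc', he⟩
    exact ⟨τ, hb hτ, c', Set.Subset.trans ha hc', he⟩
  · -- imp_sInf
    intro a B
    apply OrderDual.ofDual.injective
    show ImpSet j₀ (OrderDual.ofDual a, OrderDual.ofDual (sInf B))
        = OrderDual.ofDual (⨅ b ∈ B,
            OrderDual.toDual (ImpSet j₀ (OrderDual.ofDual a, OrderDual.ofDual b)))
    rw [sInf_eq_iInf]
    simp only [ofDual_iInf, OrderDual.ofDual_toDual]
    ext σ
    simp only [ImpSet, JSet, Set.mem_setOf_eq, Set.iSup_eq_iUnion, Set.mem_iUnion]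
    constructor
    · rintro ⟨τ, ⟨b, hb, hτ⟩, hj⟩
      exact ⟨b, hb, τ, hτ, hj⟩
    · rintro ⟨b, hb, τ, hτ, hj⟩
      exact ⟨τ, ⟨b, hb, hτ⟩, hj⟩
  · -- S_up
    intro a a' ha hle
    exact le_trans ha (MonoPhi PUnit.{u+1}
      (fun _ => OrderDual.ofDual a') (fun _ => OrderDual.ofDual a) (fun _ => hle))
  · -- S_K
    have hset : OrderDual.ofDual (⨅ a : (Set Sig)ᵒᵈ, ⨅ b : (Set Sig)ᵒᵈ,
          OrderDual.toDual (ImpSet j₀ (OrderDual.ofDual a,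
            ImpSet j₀ (OrderDual.ofDual b, OrderDual.ofDual a))))
        = ⋃ w : Set Sig × Set Sig, ImpSet j₀ (w.1, ImpSet j₀ (w.2, w.1)) := by
      simp only [ofDual_iInf, OrderDual.ofDual_toDual]
      ext σ
      simp only [Set.iSup_eq_iUnion, Set.mem_iUnion]
      constructor
      · rintro ⟨A, B, h⟩; exact ⟨(A, B), h⟩
      · rintro ⟨⟨A, B⟩, h⟩; exact ⟨A, B, h⟩
    show ⊤ ≤ map (fun _ : PUnit.{u+1} => OrderDual.ofDual (⨅ a : (Set Sig)ᵒᵈ,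
      ⨅ b : (Set Sig)ᵒᵈ, OrderDual.toDual (ImpSet j₀ (OrderDual.ofDual a,
        ImpSet j₀ (OrderDual.ofDual b, OrderDual.ofDual a))))) Φ
    rw [hset]
    refine (keyTop (Set Sig × Set Sig)
      (fun w => ImpSet j₀ (w.1, ImpSet j₀ (w.2, w.1)))).2 ?_
    have e1 : map (fun w : Set Sig × Set Sig => ImpSet j₀ (w.1, ImpSet j₀ (w.2, w.1))) Φ
        = map (fun w : Set Sig × Set Sig => w.1) Φ
          ⇨ (map (fun w : Set Sig × Set Sig => w.2) Φ
            ⇨ map (fun w : Set Sig × Set Sig => w.1) Φ) := by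
      rw [mapImp _ (fun w : Set Sig × Set Sig => w.1)
            (fun w : Set Sig × Set Sig => ImpSet j₀ (w.2, w.1)),
          mapImp _ (fun w : Set Sig × Set Sig => w.2) (fun w : Set Sig × Set Sig => w.1)]
    rw [e1, le_himp_iff, le_himp_iff]
    exact le_trans inf_le_left inf_le_right
  · -- S_S
    have hset : OrderDual.ofDual (⨅ a : (Set Sig)ᵒᵈ, ⨅ b : (Set Sig)ᵒᵈ, ⨅ c : (Set Sig)ᵒᵈ,
          OrderDual.toDual (ImpSet j₀
            (ImpSet j₀ (OrderDual.ofDual a, ImpSet j₀ (OrderDual.ofDual b, OrderDual.ofDual c)),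
             ImpSet j₀ (ImpSet j₀ (OrderDual.ofDual a, OrderDual.ofDual b),
               ImpSet j₀ (OrderDual.ofDual a, OrderDual.ofDual c)))))
        = ⋃ w : Set Sig × Set Sig × Set Sig,
            ImpSet j₀ (ImpSet j₀ (w.1, ImpSet j₀ (w.2.1, w.2.2)),
              ImpSet j₀ (ImpSet j₀ (w.1, w.2.1), ImpSet j₀ (w.1, w.2.2))) := by
      simp only [ofDual_iInf, OrderDual.ofDual_toDual]
      ext σ
      simp only [Set.iSup_eq_iUnion, Set.mem_iUnion]
      constructor
      · rintro ⟨A, B, C, h⟩; exact ⟨(A, B, C), h⟩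
      · rintro ⟨⟨A, B, C⟩, h⟩; exact ⟨A, B, C, h⟩
    show ⊤ ≤ map (fun _ : PUnit.{u+1} => OrderDual.ofDual
      (⨅ a : (Set Sig)ᵒᵈ, ⨅ b : (Set Sig)ᵒᵈ, ⨅ c : (Set Sig)ᵒᵈ,
          OrderDual.toDual (ImpSet j₀
            (ImpSet j₀ (OrderDual.ofDual a, ImpSet j₀ (OrderDual.ofDual b, OrderDual.ofDual c)),
             ImpSet j₀ (ImpSet j₀ (OrderDual.ofDual a, OrderDual.ofDual b),
               ImpSet j₀ (OrderDual.ofDual a, OrderDual.ofDual c)))))) Φ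
    rw [hset]
    refine (keyTop (Set Sig × Set Sig × Set Sig)
      (fun w => ImpSet j₀ (ImpSet j₀ (w.1, ImpSet j₀ (w.2.1, w.2.2)),
        ImpSet j₀ (ImpSet j₀ (w.1, w.2.1), ImpSet j₀ (w.1, w.2.2))))).2 ?_
    set X₃ := Set Sig × Set Sig × Set Sig with hX₃
    have e1 : map (fun w : X₃ => ImpSet j₀ (ImpSet j₀ (w.1, ImpSet j₀ (w.2.1, w.2.2)),
          ImpSet j₀ (ImpSet j₀ (w.1, w.2.1), ImpSet j₀ (w.1, w.2.2)))) Φ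
        = (map (fun w : X₃ => w.1) Φ ⇨ (map (fun w : X₃ => w.2.1) Φ
            ⇨ map (fun w : X₃ => w.2.2) Φ))
          ⇨ ((map (fun w : X₃ => w.1) Φ ⇨ map (fun w : X₃ => w.2.1) Φ)
            ⇨ (map (fun w : X₃ => w.1) Φ ⇨ map (fun w : X₃ => w.2.2) Φ)) := by
      rw [mapImp _ (fun w : X₃ => ImpSet j₀ (w.1, ImpSet j₀ (w.2.1, w.2.2)))
            (fun w : X₃ => ImpSet j₀ (ImpSet j₀ (w.1, w.2.1), ImpSet j₀ (w.1, w.2.2))),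
          mapImp _ (fun w : X₃ => w.1) (fun w : X₃ => ImpSet j₀ (w.2.1, w.2.2)),
          mapImp _ (fun w : X₃ => w.2.1) (fun w : X₃ => w.2.2),
          mapImp _ (fun w : X₃ => ImpSet j₀ (w.1, w.2.1))
            (fun w : X₃ => ImpSet j₀ (w.1, w.2.2)),
          mapImp _ (fun w : X₃ => w.1) (fun w : X₃ => w.2.1),
          mapImp _ (fun w : X₃ => w.1) (fun w : X₃ => w.2.2)]
    rw [e1]
    set A := map (fun w : X₃ => w.1) Φ
    set B := map (fun w : X₃ => w.2.1) Φ
    set C := map (fun w : X₃ => w.2.2) Φ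
    rw [le_himp_iff, le_himp_iff, le_himp_iff]
    have h1 : ⊤ ⊓ (A ⇨ B ⇨ C) ⊓ (A ⇨ B) ⊓ A ≤ A := inf_le_right
    have h2 : ⊤ ⊓ (A ⇨ B ⇨ C) ⊓ (A ⇨ B) ⊓ A ≤ A ⇨ B :=
      le_trans inf_le_left inf_le_right
    have h3 : ⊤ ⊓ (A ⇨ B ⇨ C) ⊓ (A ⇨ B) ⊓ A ≤ A ⇨ (B ⇨ C) :=
      le_trans (le_trans inf_le_left inf_le_left) inf_le_right
    have h4 : ⊤ ⊓ (A ⇨ B ⇨ C) ⊓ (A ⇨ B) ⊓ A ≤ B := le_trans (le_inf h2 h1) himp_inf_le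
    have h5 : ⊤ ⊓ (A ⇨ B ⇨ C) ⊓ (A ⇨ B) ⊓ A ≤ B ⇨ C := le_trans (le_inf h3 h1) himp_inf_le
    exact le_trans (le_inf h5 h4) himp_inf_le
  · -- S_mp
    intro a b hab ha
    have hab' : ⊤ ≤ map (fun _ : PUnit.{u+1} =>
        ImpSet j₀ (OrderDual.ofDual a, OrderDual.ofDual b)) Φ := hab
    rw [mapImp PUnit.{u+1} (fun _ => OrderDual.ofDual a) (fun _ => OrderDual.ofDual b)] at hab'
    exact le_trans (le_inf hab' ha) himp_inf_le
  · -- surjectivity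
    intro X p
    obtain ⟨σf, hσ⟩ := hg X p
    refine ⟨fun x => OrderDual.toDual ({σf x} : Set Sig), ?_⟩
    calc map (fun x => ({σf x} : Set Sig)) Φ
        = map σf (map (fun σ : Sig => ({σ} : Set Sig)) Φ) :=
          (mapc σf (fun σ : Sig => ({σ} : Set Sig)) Φ).symm
      _ = map σf tr := by rw [singPhi]
      _ = p := hσ
  · -- order characterization
    intro X a b
    have hset : OrderDual.ofDual (⨅ x : X, OrderDual.toDual
          (ImpSet j₀ (OrderDual.ofDual (a x), OrderDual.ofDual (b x))))
        = ⋃ x : X, ImpSet j₀ (OrderDual.ofDual (a x), OrderDual.ofDual (b x)) := by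
      simp only [ofDual_iInf, OrderDual.ofDual_toDual]
      rfl
    have h3 : map (fun x : X => ImpSet j₀ (OrderDual.ofDual (a x), OrderDual.ofDual (b x))) Φ
        = map (fun x => OrderDual.ofDual (a x)) Φ ⇨ map (fun x => OrderDual.ofDual (b x)) Φ :=
      mapImp X _ _
    constructor
    · intro hle
      show ⊤ ≤ map (fun _ : PUnit.{u+1} => OrderDual.ofDual (⨅ x : X, OrderDual.toDual
        (ImpSet j₀ (OrderDual.ofDual (a x), OrderDual.ofDual (b x))))) Φ
      rw [hset]
      refine (keyTop X _).2 ?_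
      rw [h3, le_himp_iff, top_inf_eq]
      exact hle
    · intro hmem
      have hm' : ⊤ ≤ map (fun _ : PUnit.{u+1} => OrderDual.ofDual (⨅ x : X, OrderDual.toDual
          (ImpSet j₀ (OrderDual.ofDual (a x), OrderDual.ofDual (b x))))) Φ := hmem
      rw [hset] at hm'
      have h4 := (keyTop X _).1 hm'
      rw [h3, le_himp_iff, top_inf_eq] at h4
      exact h4
  · -- naturality
    intro X Y f b
    exact (mapc f (fun y => OrderDual.ofDual (b y)) Φ).symm
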